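/- Fix i < j in {1,…,n}. For a word β in G_{n,P}^2, and for each occurrence c of a generator a_{ij}^ε in β and each k ∉ {i,j}, define i_c^P(k) ∈ Z/2 by N_{ik}^0 + N_{jk}^0 mod 2 if ε = 0, and N_{ik}^0 + N_{jk}^1 mod 2 if ε = 1, where N_{st}^δ counts occurrences of a_{st}^δ before c. Then the map w^P_{{i,j}} : G_{n,P}^2 → F_n^2 sending β to the product of the functions i_{c_1}^P ⋯ i_{c_m}^P over all occurrences of a_{ij}^ε in order is well-defined, where F_n^2 is the free product of copies of Z/2 indexed by functions {1,…,n} \ {i,j} → Z/2. -/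

import Mathlib

/-- Index type for the generators `a_{ij}`: two-element subsets of `Fin n`. -/
abbrev PairIdx (n : ℕ) := {s : Finset (Fin n) // s.card = 2}

/-- The unordered pair `{i,j}` as an index. -/
def mkPair {n : ℕ} (i j : Fin n) (h : i ≠ j) : PairIdx n := ⟨{i, j}, Finset.card_pair h⟩

/-- Relations of the group `G_n^2`. -/
def gn2Rels (n : ℕ) : Set (FreeGroup (PairIdx n)) :=
  {r | (∃ (i j : Fin n) (h : i ≠ j),
          r = FreeGroup.of (mkPair i j h) * FreeGroup.of (mkPair i j h)) ∨
       (∃ (i j k l : Fin n) (hij : i ≠ j) (hkl : k ≠ l),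
          i ≠ k ∧ i ≠ l ∧ j ≠ k ∧ j ≠ l ∧
          r = FreeGroup.of (mkPair i j hij) * FreeGroup.of (mkPair k l hkl) *
              (FreeGroup.of (mkPair i j hij))⁻¹ * (FreeGroup.of (mkPair k l hkl))⁻¹) ∨
       (∃ (i j k : Fin n) (hij : i ≠ j) (hik : i ≠ k) (hjk : j ≠ k),
          r = FreeGroup.of (mkPair i j hij) * FreeGroup.of (mkPair i k hik) *
              FreeGroup.of (mkPair j k hjk) *
              (FreeGroup.of (mkPair j k hjk) * FreeGroup.of (mkPair i k hik) *
               FreeGroup.of (mkPair i j hij))⁻¹)}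

/-- The group `G_n^2`. -/
abbrev Gn2 (n : ℕ) := PresentedGroup (gn2Rels n)

/-- The generator `a_{ij}` of `G_n^2`. -/
def A2 {n : ℕ} (i j : Fin n) (h : i ≠ j) : Gn2 n := PresentedGroup.of (mkPair i j h)

/-- Relations of the group `G_{n,P}^2` (`G_n^2` with parity). -/
def gnP2Rels (n : ℕ) : Set (FreeGroup (PairIdx n × ZMod 2)) :=
  {r | (∃ (i j : Fin n) (h : i ≠ j) (ε : ZMod 2),
          r = FreeGroup.of (mkPair i j h, ε) * FreeGroup.of (mkPair i j h, ε)) ∨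
       (∃ (i j k l : Fin n) (hij : i ≠ j) (hkl : k ≠ l) (ε₁ ε₂ : ZMod 2),
          i ≠ k ∧ i ≠ l ∧ j ≠ k ∧ j ≠ l ∧
          r = FreeGroup.of (mkPair i j hij, ε₁) * FreeGroup.of (mkPair k l hkl, ε₂) *
              (FreeGroup.of (mkPair i j hij, ε₁))⁻¹ * (FreeGroup.of (mkPair k l hkl, ε₂))⁻¹) ∨
       (∃ (i j k : Fin n) (hij : i ≠ j) (hik : i ≠ k) (hjk : j ≠ k)
          (εij εik εjk : ZMod 2), εij + εik + εjk = 0 ∧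
          r = FreeGroup.of (mkPair i j hij, εij) * FreeGroup.of (mkPair i k hik, εik) *
              FreeGroup.of (mkPair j k hjk, εjk) *
              (FreeGroup.of (mkPair j k hjk, εjk) * FreeGroup.of (mkPair i k hik, εik) *
               FreeGroup.of (mkPair i j hij, εij))⁻¹)}

/-- The group `G_{n,P}^2`. -/
abbrev GnP2 (n : ℕ) := PresentedGroup (gnP2Rels n)

/-- The generator `a_{ij}^ε` of `G_{n,P}^2`. -/
def AP {n : ℕ} (i j : Fin n) (h : i ≠ j) (ε : ZMod 2) : GnP2 n :=
  PresentedGroup.of (mkPair i j h, ε)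

/-- Alphabet of `G_{n,D}^2`: crossing generators `a_{ij}` and point generators `τ_i`. -/
abbrev DIdx (n : ℕ) := PairIdx n ⊕ Fin n

/-- Relations of the group `G_{n,D}^2` (`G_n^2` with points). -/
def gnD2Rels (n : ℕ) : Set (FreeGroup (DIdx n)) :=
  {r | (∃ (i j : Fin n) (h : i ≠ j),
          r = FreeGroup.of (Sum.inl (mkPair i j h) : DIdx n) *
              FreeGroup.of (Sum.inl (mkPair i j h) : DIdx n)) ∨
       (∃ (i j k l : Fin n) (hij : i ≠ j) (hkl : k ≠ l),
          i ≠ k ∧ i ≠ l ∧ j ≠ k ∧ j ≠ l ∧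
          r = FreeGroup.of (Sum.inl (mkPair i j hij) : DIdx n) *
              FreeGroup.of (Sum.inl (mkPair k l hkl) : DIdx n) *
              (FreeGroup.of (Sum.inl (mkPair i j hij) : DIdx n))⁻¹ *
              (FreeGroup.of (Sum.inl (mkPair k l hkl) : DIdx n))⁻¹) ∨
       (∃ (i j k : Fin n) (hij : i ≠ j) (hik : i ≠ k) (hjk : j ≠ k),
          r = FreeGroup.of (Sum.inl (mkPair i j hij) : DIdx n) *
              FreeGroup.of (Sum.inl (mkPair i k hik) : DIdx n) *
              FreeGroup.of (Sum.inl (mkPair j k hjk) : DIdx n) *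
              (FreeGroup.of (Sum.inl (mkPair j k hjk) : DIdx n) *
               FreeGroup.of (Sum.inl (mkPair i k hik) : DIdx n) *
               FreeGroup.of (Sum.inl (mkPair i j hij) : DIdx n))⁻¹) ∨
       (∃ i : Fin n,
          r = FreeGroup.of (Sum.inr i : DIdx n) * FreeGroup.of (Sum.inr i : DIdx n)) ∨
       (∃ i j : Fin n,
          r = FreeGroup.of (Sum.inr i : DIdx n) * FreeGroup.of (Sum.inr j : DIdx n) *
              (FreeGroup.of (Sum.inr i : DIdx n))⁻¹ * (FreeGroup.of (Sum.inr j : DIdx n))⁻¹) ∨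
       (∃ (i j : Fin n) (h : i ≠ j),
          r = FreeGroup.of (Sum.inr i : DIdx n) * FreeGroup.of (Sum.inr j : DIdx n) *
              FreeGroup.of (Sum.inl (mkPair i j h) : DIdx n) *
              FreeGroup.of (Sum.inr j : DIdx n) * FreeGroup.of (Sum.inr i : DIdx n) *
              (FreeGroup.of (Sum.inl (mkPair i j h) : DIdx n))⁻¹) ∨
       (∃ (i j k : Fin n) (h : i ≠ j), k ≠ i ∧ k ≠ j ∧
          r = FreeGroup.of (Sum.inl (mkPair i j h) : DIdx n) *
              FreeGroup.of (Sum.inr k : DIdx n) *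
              (FreeGroup.of (Sum.inl (mkPair i j h) : DIdx n))⁻¹ *
              (FreeGroup.of (Sum.inr k : DIdx n))⁻¹)}

/-- The group `G_{n,D}^2`. -/
abbrev GnD2 (n : ℕ) := PresentedGroup (gnD2Rels n)

/-- The generator `a_{ij}` of `G_{n,D}^2`. -/
def AD {n : ℕ} (i j : Fin n) (h : i ≠ j) : GnD2 n := PresentedGroup.of (Sum.inl (mkPair i j h))

/-- The generator `τ_i` of `G_{n,D}^2`. -/
def T {n : ℕ} (i : Fin n) : GnD2 n := PresentedGroup.of (Sum.inr i)

/-- The image of a word in `G_{n,P}^2`. -/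
def mkP (n : ℕ) (L : List ((PairIdx n × ZMod 2) × Bool)) : GnP2 n :=
  PresentedGroup.mk (gnP2Rels n) (FreeGroup.mk L)

/-- Index type for the generators of `F_n^2`: functions `{1,…,n} \ {i,j} → Z/2`. -/
abbrev Fn2Idx (n : ℕ) (i j : Fin n) := ({l : Fin n // l ≠ i ∧ l ≠ j}) → ZMod 2

/-- Relations of `F_n^2`: every generator is an involution, and nothing else. -/
def fn2Rels (n : ℕ) (i j : Fin n) : Set (FreeGroup (Fn2Idx n i j)) :=
  {r | ∃ σ : Fn2Idx n i j, r = FreeGroup.of σ * FreeGroup.of σ}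

/-- The group `F_n^2`, the free product of `2^{n-2}` copies of `Z/2`. -/
abbrev Fn2 (n : ℕ) (i j : Fin n) := PresentedGroup (fn2Rels n i j)

/-- The word-level map `w^P_{{i,j}}`: reading a word over the alphabet of `G_{n,P}^2` from
left to right, keeping the running parity `N (s, δ)` of the number of occurrences of each
letter `a_s^δ` seen so far, every occurrence `c` of a letter `a_{ij}^ε` contributes the
generator `i_c^P` of `F_n^2` given by `i_c^P(k) = N_{ik}^0 + N_{jk}^0` if `ε = 0` and
`i_c^P(k) = N_{ik}^0 + N_{jk}^1` if `ε = 1`. -/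
def wW (n : ℕ) (i j : Fin n) (hij : i ≠ j) :
    List ((PairIdx n × ZMod 2) × Bool) → ((PairIdx n × ZMod 2) → ZMod 2) → Fn2 n i j
  | [], _ => 1
  | (c, _) :: L, N =>
      (if c.1 = mkPair i j hij then
        PresentedGroup.of (fun k : {l : Fin n // l ≠ i ∧ l ≠ j} =>
          if c.2 = 0 then
            N (mkPair i k.1 (Ne.symm k.2.1), 0) + N (mkPair j k.1 (Ne.symm k.2.2), 0)
          else
            N (mkPair i k.1 (Ne.symm k.2.1), 0) + N (mkPair j k.1 (Ne.symm k.2.2), 1))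
      else 1) * wW n i j hij L (Function.update N c (N c + 1))

namespace S19

/-- The state space: parities of the number of occurrences of each letter. -/
abbrev St (n : ℕ) := (PairIdx n × ZMod 2) → ZMod 2

variable {n : ℕ}

lemma z2 : ∀ x : ZMod 2, x + x = 0 := by decide

lemma mem_mkPair {a b x : Fin n} {h : a ≠ b} : x ∈ (mkPair a b h).1 ↔ x = a ∨ x = b := by
  simp [mkPair]

lemma mem_mkPair_left (a b : Fin n) (h : a ≠ b) : a ∈ (mkPair a b h).1 := by
  simp [mkPair]

lemma mem_mkPair_right (a b : Fin n) (h : a ≠ b) : b ∈ (mkPair a b h).1 := by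
  simp [mkPair]

lemma mem_mkPair' (x a b : Fin n) (h : a ≠ b) (hx : x ∈ (mkPair a b h).1) :
    x = a ∨ x = b := by
  simpa [mkPair] using hx

lemma mkPair_comm (a b : Fin n) (h : a ≠ b) : mkPair a b h = mkPair b a h.symm :=
  Subtype.ext (Finset.pair_comm a b)

lemma mkPair_inj {a b c d : Fin n} {h1 : a ≠ b} {h2 : c ≠ d}
    (h : mkPair a b h1 = mkPair c d h2) : (a = c ∧ b = d) ∨ (a = d ∧ b = c) := by
  have hv : ({a, b} : Finset (Fin n)) = {c, d} := congrArg Subtype.val h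
  have ha : a = c ∨ a = d := by
    have : a ∈ ({c, d} : Finset (Fin n)) := by rw [← hv]; simp
    simpa using this
  have hb : b = c ∨ b = d := by
    have : b ∈ ({c, d} : Finset (Fin n)) := by rw [← hv]; simp
    simpa using this
  rcases ha with h | h <;> rcases hb with h' | h'
  · exact absurd (h.trans h'.symm) h1
  · exact Or.inl ⟨h, h'⟩
  · exact Or.inr ⟨h, h'⟩
  · exact absurd (h.trans h'.symm) h1

/-- The contribution of a single occurrence of a letter, given the current state. -/
def emit (i j : Fin n) (hij : i ≠ j) (c : PairIdx n × ZMod 2) (N : St n) : Fn2 n i j :=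
  if c.1 = mkPair i j hij then
    PresentedGroup.of (fun k : {l : Fin n // l ≠ i ∧ l ≠ j} =>
      N (mkPair i k.1 (Ne.symm k.2.1), 0) + N (mkPair j k.1 (Ne.symm k.2.2), c.2))
  else 1

lemma emit_of_ne (i j : Fin n) (hij : i ≠ j) {c : PairIdx n × ZMod 2}
    (hc : c.1 ≠ mkPair i j hij) (N : St n) : emit i j hij c N = 1 := if_neg hc

lemma emit_congr (i j : Fin n) (hij : i ≠ j) (c : PairIdx n × ZMod 2) {N N' : St n}
    (h : ∀ k : {l : Fin n // l ≠ i ∧ l ≠ j},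
      N (mkPair i k.1 (Ne.symm k.2.1), 0) + N (mkPair j k.1 (Ne.symm k.2.2), c.2) =
      N' (mkPair i k.1 (Ne.symm k.2.1), 0) + N' (mkPair j k.1 (Ne.symm k.2.2), c.2)) :
    emit i j hij c N = emit i j hij c N' := by
  unfold emit
  split
  · exact congrArg _ (funext h)
  · rfl

/-- Shifting the state at a coordinate whose pair contains both or neither of `i, j`
does not change the contribution. -/
lemma emit_shift1 (i j : Fin n) (hij : i ≠ j) (c d : PairIdx n × ZMod 2)
    (hd : i ∈ d.1.1 ↔ j ∈ d.1.1) (N : St n) :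
    emit i j hij c (fun x => N x + if x = d then 1 else 0) = emit i j hij c N := by
  refine emit_congr i j hij c fun k => ?_
  have h1 : (mkPair i k.1 (Ne.symm k.2.1), (0 : ZMod 2)) ≠ d := by
    intro he
    have hi : i ∈ d.1.1 := by rw [← he]; exact mem_mkPair_left i k.1 (Ne.symm k.2.1)
    have hj := hd.mp hi
    rw [← he] at hj
    rcases mem_mkPair' j i k.1 (Ne.symm k.2.1) hj with h | h
    · exact hij h.symm
    · exact k.2.2 h.symm
  have h2 : (mkPair j k.1 (Ne.symm k.2.2), c.2) ≠ d := by
    intro he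
    have hj : j ∈ d.1.1 := by rw [← he]; exact mem_mkPair_left j k.1 (Ne.symm k.2.2)
    have hi := hd.mpr hj
    rw [← he] at hi
    rcases mem_mkPair' i j k.1 (Ne.symm k.2.2) hi with h | h
    · exact hij h
    · exact k.2.1 h.symm
  rw [if_neg h1, if_neg h2, add_zero, add_zero]

/-- The key parity computation: shifting by two letters of a triangle through `{i,j}`
with total parity `0` does not change the contribution of the third letter. -/
lemma shift_aux (i j : Fin n) (hij : i ≠ j) (u : Fin n) (hiu : i ≠ u) (hju : j ≠ u)
    (ea eb : ZMod 2) (c : PairIdx n × ZMod 2) (hc : c.1 = mkPair i j hij)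
    (hp : c.2 + ea + eb = 0) (N : St n) :
    emit i j hij c (fun x => N x + ((if x = (mkPair i u hiu, ea) then 1 else 0)
      + (if x = (mkPair j u hju, eb) then 1 else 0))) = emit i j hij c N := by
  refine emit_congr i j hij c fun k => ?_
  have h2a : (mkPair j k.1 (Ne.symm k.2.2), c.2) ≠ (mkPair i u hiu, ea) := by
    intro he
    rcases mkPair_inj (h1 := Ne.symm k.2.2) (h2 := hiu) (congrArg Prod.fst he) with ⟨h, _⟩ | ⟨h, _⟩
    · exact hij h.symm
    · exact hju h
  have h1b : (mkPair i k.1 (Ne.symm k.2.1), (0 : ZMod 2)) ≠ (mkPair j u hju, eb) := by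
    intro he
    rcases mkPair_inj (h1 := Ne.symm k.2.1) (h2 := hju) (congrArg Prod.fst he) with ⟨h, _⟩ | ⟨h, _⟩
    · exact hij h
    · exact hiu h
  by_cases hk : k.1 = u
  · subst hk
    by_cases hea : ea = 0
    · have heb : eb = c.2 := by
        have key : ∀ a b c : ZMod 2, a + b + c = 0 → b = 0 → c = a := by decide
        exact key _ _ _ hp hea
      have h1a : (mkPair i k.1 (Ne.symm k.2.1), (0 : ZMod 2)) = (mkPair i k.1 hiu, ea) := by
        rw [hea]
      have h2b : (mkPair j k.1 (Ne.symm k.2.2), c.2) = (mkPair j k.1 hju, eb) := by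
        rw [heb]
      rw [if_pos h1a, if_neg h1b, if_neg h2a, if_pos h2b]
      have key : ∀ a b : ZMod 2, (a + ((1 : ZMod 2) + 0)) + (b + (0 + 1)) = a + b := by decide
      exact key _ _
    · have heb : eb ≠ c.2 := by
        have key : ∀ a b c : ZMod 2, a + b + c = 0 → ¬b = 0 → ¬c = a := by decide
        exact key _ _ _ hp hea
      have h1a : (mkPair i k.1 (Ne.symm k.2.1), (0 : ZMod 2)) ≠ (mkPair i k.1 hiu, ea) := by
        intro he
        exact hea (congrArg Prod.snd he).symm
      have h2b : (mkPair j k.1 (Ne.symm k.2.2), c.2) ≠ (mkPair j k.1 hju, eb) := by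
        intro he
        exact heb (congrArg Prod.snd he).symm
      rw [if_neg h1a, if_neg h1b, if_neg h2a, if_neg h2b]
      have key : ∀ a b : ZMod 2, (a + ((0 : ZMod 2) + 0)) + (b + (0 + 0)) = a + b := by decide
      exact key _ _
  · have h1a : (mkPair i k.1 (Ne.symm k.2.1), (0 : ZMod 2)) ≠ (mkPair i u hiu, ea) := by
      intro he
      rcases mkPair_inj (h1 := Ne.symm k.2.1) (h2 := hiu) (congrArg Prod.fst he) with ⟨_, h⟩ | ⟨h, _⟩
      · exact hk h
      · exact hiu h
    have h2b : (mkPair j k.1 (Ne.symm k.2.2), c.2) ≠ (mkPair j u hju, eb) := by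
      intro he
      rcases mkPair_inj (h1 := Ne.symm k.2.2) (h2 := hju) (congrArg Prod.fst he) with ⟨_, h⟩ | ⟨h, _⟩
      · exact hk h
      · exact hju h
    rw [if_neg h1a, if_neg h1b, if_neg h2a, if_neg h2b]
    have key : ∀ a b : ZMod 2, (a + ((0 : ZMod 2) + 0)) + (b + (0 + 0)) = a + b := by decide
    exact key _ _

/-- The triangle shift lemma in symmetric form. -/
lemma tri_shift (i j : Fin n) (hij : i ≠ j) (s t u : Fin n)
    (hst : s ≠ t) (hsu : s ≠ u) (htu : t ≠ u) (e1 e2 e3 : ZMod 2)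
    (hp : e1 + e2 + e3 = 0) (N : St n) :
    emit i j hij (mkPair s t hst, e1)
      (fun x => N x + ((if x = (mkPair s u hsu, e2) then 1 else 0)
        + (if x = (mkPair t u htu, e3) then 1 else 0)))
      = emit i j hij (mkPair s t hst, e1) N := by
  by_cases hc : mkPair s t hst = mkPair i j hij
  · rcases mkPair_inj hc with ⟨hs, ht⟩ | ⟨hs, ht⟩
    · subst hs; subst ht
      exact shift_aux s t hij u hsu htu e2 e3 _ hc hp N
    · subst hs; subst ht
      have key := shift_aux t s hij u htu hsu e3 e2 (mkPair s t hst, e1) hc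
        (by linear_combination hp) N
      refine Eq.trans ?_ key
      congr 1
      funext x
      ring
  · exact (emit_of_ne i j hij hc _).trans (emit_of_ne i j hij hc _).symm

/-- The twisted (wreath-type) group in which the word map takes values. -/
structure W (n : ℕ) (i j : Fin n) where
  fn : St n → Fn2 n i j
  sh : St n

lemma wext {i j : Fin n} {a b : W n i j} (h1 : a.fn = b.fn) (h2 : a.sh = b.sh) : a = b := by
  cases a; cases b; cases h1; cases h2; rfl

instance {i j : Fin n} : Group (W n i j) where
  mul a b := ⟨fun N => a.fn N * b.fn (fun x => N x + a.sh x), fun x => a.sh x + b.sh x⟩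
  one := ⟨fun _ => 1, fun _ => 0⟩
  inv a := ⟨fun N => (a.fn (fun x => N x + a.sh x))⁻¹, a.sh⟩
  mul_assoc a b c := by
    apply wext
    · funext N
      show (a.fn N * b.fn (fun x => N x + a.sh x)) *
          c.fn (fun x => N x + (a.sh x + b.sh x)) =
        a.fn N * (b.fn (fun x => N x + a.sh x) *
          c.fn (fun x => (N x + a.sh x) + b.sh x))
      rw [mul_assoc]
      have hsh : (fun x => N x + (a.sh x + b.sh x)) =
          (fun x => (N x + a.sh x) + b.sh x) := by
        funext x; rw [add_assoc]
      rw [hsh]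
    · funext x
      show (a.sh x + b.sh x) + c.sh x = a.sh x + (b.sh x + c.sh x)
      rw [add_assoc]
  one_mul a := by
    apply wext
    · funext N
      show 1 * a.fn (fun x => N x + 0) = a.fn N
      rw [one_mul]
      have : (fun x => N x + 0) = N := by funext x; rw [add_zero]
      rw [this]
    · funext x
      show 0 + a.sh x = a.sh x
      rw [zero_add]
  mul_one a := by
    apply wext
    · funext N
      show a.fn N * 1 = a.fn N
      rw [mul_one]
    · funext x
      show a.sh x + 0 = a.sh x
      rw [add_zero]
  inv_mul_cancel a := by
    apply wext
    · funext N
      show (a.fn (fun x => N x + a.sh x))⁻¹ * a.fn (fun x => N x + a.sh x) = 1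
      exact inv_mul_cancel _
    · funext x
      show a.sh x + a.sh x = 0
      exact z2 _

/-- The image of a generator in `W`. -/
def gg (i j : Fin n) (hij : i ≠ j) (c : PairIdx n × ZMod 2) : W n i j :=
  ⟨emit i j hij c, fun x => if x = c then 1 else 0⟩

lemma of_mul_self (i j : Fin n) (σ : Fn2Idx n i j) :
    (PresentedGroup.of σ : Fn2 n i j) * PresentedGroup.of σ = 1 := by
  have h : (PresentedGroup.mk (fn2Rels n i j)) (FreeGroup.of σ * FreeGroup.of σ) = 1 := by
    apply (QuotientGroup.eq_one_iff _).mpr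
    exact Subgroup.subset_normalClosure ⟨σ, rfl⟩
  rw [map_mul] at h
  exact h

lemma gg_mul_self (i j : Fin n) (hij : i ≠ j) (c : PairIdx n × ZMod 2) :
    gg i j hij c * gg i j hij c = 1 := by
  apply wext
  · funext N
    show emit i j hij c N * emit i j hij c (fun x => N x + if x = c then 1 else 0) = 1
    by_cases hc : c.1 = mkPair i j hij
    · rw [emit_shift1 i j hij c c (by rw [hc]; simp [mem_mkPair])]
      unfold emit
      rw [if_pos hc]
      exact of_mul_self i j _
    · rw [emit_of_ne i j hij hc, emit_of_ne i j hij hc, one_mul]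
  · funext x
    show (if x = c then (1 : ZMod 2) else 0) + (if x = c then 1 else 0) = 0
    exact z2 _

lemma gg_inv (i j : Fin n) (hij : i ≠ j) (c : PairIdx n × ZMod 2) :
    (gg i j hij c)⁻¹ = gg i j hij c :=
  inv_eq_of_mul_eq_one_right (gg_mul_self i j hij c)

lemma gg_comm (i j : Fin n) (hij : i ≠ j) (c d : PairIdx n × ZMod 2)
    (hdisj : ∀ x, x ∈ c.1.1 → x ∉ d.1.1) :
    gg i j hij c * gg i j hij d = gg i j hij d * gg i j hij c := by
  apply wext
  · funext N
    show emit i j hij c N * emit i j hij d (fun x => N x + if x = c then 1 else 0)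
       = emit i j hij d N * emit i j hij c (fun x => N x + if x = d then 1 else 0)
    by_cases hc : c.1 = mkPair i j hij
    · have hd : d.1 ≠ mkPair i j hij := by
        intro h
        exact hdisj i (by rw [hc]; exact mem_mkPair_left i j hij)
          (by rw [h]; exact mem_mkPair_left i j hij)
      have hdi : i ∉ d.1.1 := hdisj i (by rw [hc]; exact mem_mkPair_left i j hij)
      have hdj : j ∉ d.1.1 := hdisj j (by rw [hc]; exact mem_mkPair_right i j hij)
      rw [emit_of_ne i j hij hd, emit_of_ne i j hij hd,
        emit_shift1 i j hij c d (iff_of_false hdi hdj), mul_one, one_mul]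
    · by_cases hd : d.1 = mkPair i j hij
      · have hci : i ∉ c.1.1 := fun h => hdisj i h (by rw [hd]; exact mem_mkPair_left i j hij)
        have hcj : j ∉ c.1.1 := fun h => hdisj j h (by rw [hd]; exact mem_mkPair_right i j hij)
        rw [emit_of_ne i j hij hc, emit_of_ne i j hij hc,
          emit_shift1 i j hij d c (iff_of_false hci hcj), mul_one, one_mul]
      · rw [emit_of_ne i j hij hc, emit_of_ne i j hij hc,
          emit_of_ne i j hij hd, emit_of_ne i j hij hd]
  · funext x
    show (if x = c then (1 : ZMod 2) else 0) + (if x = d then 1 else 0)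
       = (if x = d then (1 : ZMod 2) else 0) + (if x = c then 1 else 0)
    rw [add_comm]

lemma gg_tri (i j : Fin n) (hij : i ≠ j) (s t u : Fin n)
    (hst : s ≠ t) (hsu : s ≠ u) (htu : t ≠ u) (e1 e2 e3 : ZMod 2)
    (hp : e1 + e2 + e3 = 0) :
    gg i j hij (mkPair s t hst, e1) * gg i j hij (mkPair s u hsu, e2) *
      gg i j hij (mkPair t u htu, e3)
    = gg i j hij (mkPair t u htu, e3) * gg i j hij (mkPair s u hsu, e2) *
      gg i j hij (mkPair s t hst, e1) := by
  apply wext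
  · funext N
    show (emit i j hij (mkPair s t hst, e1) N *
        emit i j hij (mkPair s u hsu, e2)
          (fun x => N x + if x = (mkPair s t hst, e1) then 1 else 0)) *
        emit i j hij (mkPair t u htu, e3)
          (fun x => N x + ((if x = (mkPair s t hst, e1) then 1 else 0)
            + (if x = (mkPair s u hsu, e2) then 1 else 0)))
      = (emit i j hij (mkPair t u htu, e3) N *
        emit i j hij (mkPair s u hsu, e2)
          (fun x => N x + if x = (mkPair t u htu, e3) then 1 else 0)) *
        emit i j hij (mkPair s t hst, e1)
          (fun x => N x + ((if x = (mkPair t u htu, e3) then 1 else 0)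
            + (if x = (mkPair s u hsu, e2) then 1 else 0)))
    by_cases h1 : mkPair s t hst = mkPair i j hij
    · have h2 : mkPair s u hsu ≠ mkPair i j hij := by
        intro h
        rcases mkPair_inj (h1.trans h.symm) with ⟨_, h'⟩ | ⟨h', _⟩
        · exact htu h'
        · exact hsu h'
      have h3 : mkPair t u htu ≠ mkPair i j hij := by
        intro h
        rcases mkPair_inj (h1.trans h.symm) with ⟨h', _⟩ | ⟨h', _⟩
        · exact hst h'
        · exact hsu h'
      rw [emit_of_ne i j hij (c := (mkPair s u hsu, e2)) h2,
        emit_of_ne i j hij (c := (mkPair s u hsu, e2)) h2,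
        emit_of_ne i j hij (c := (mkPair t u htu, e3)) h3,
        emit_of_ne i j hij (c := (mkPair t u htu, e3)) h3]
      simp only [one_mul, mul_one]
      refine Eq.symm (Eq.trans ?_ (tri_shift i j hij s t u hst hsu htu e1 e2 e3 hp N))
      congr 1
      funext x
      ring
    · by_cases h2 : mkPair s u hsu = mkPair i j hij
      · have h3 : mkPair t u htu ≠ mkPair i j hij := by
          intro h
          rcases mkPair_inj (h2.trans h.symm) with ⟨h', _⟩ | ⟨_, h'⟩
          · exact hst h'
          · exact htu (h'.symm)
        rw [emit_of_ne i j hij (c := (mkPair s t hst, e1)) h1,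
          emit_of_ne i j hij (c := (mkPair s t hst, e1)) h1,
          emit_of_ne i j hij (c := (mkPair t u htu, e3)) h3,
          emit_of_ne i j hij (c := (mkPair t u htu, e3)) h3]
        simp only [one_mul, mul_one]
        have key := tri_shift i j hij s u t hsu hst (Ne.symm htu) e2 e1 e3
          (by linear_combination hp)
          (fun x => N x + if x = (mkPair t u htu, e3) then 1 else 0)
        simp only [show mkPair u t (Ne.symm htu) = mkPair t u htu from
          Subtype.ext (Finset.pair_comm u t)] at key
        refine Eq.trans ?_ key
        congr 1
        funext x
        show N x + (if x = (mkPair s t hst, e1) then (1 : ZMod 2) else 0)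
          = (N x + (if x = (mkPair t u htu, e3) then 1 else 0)) +
            ((if x = (mkPair s t hst, e1) then (1 : ZMod 2) else 0)
              + (if x = (mkPair t u htu, e3) then 1 else 0))
        have key2 : ∀ a b c : ZMod 2, a + b = (a + c) + (b + c) := by decide
        exact key2 _ _ _
      · by_cases h3 : mkPair t u htu = mkPair i j hij
        · rw [emit_of_ne i j hij (c := (mkPair s t hst, e1)) h1,
            emit_of_ne i j hij (c := (mkPair s t hst, e1)) h1,
            emit_of_ne i j hij (c := (mkPair s u hsu, e2)) h2,
            emit_of_ne i j hij (c := (mkPair s u hsu, e2)) h2]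
          simp only [one_mul, mul_one]
          have key := tri_shift i j hij t u s htu (Ne.symm hst) (Ne.symm hsu) e3 e1 e2
            (by linear_combination hp) N
          simp only [show mkPair t s (Ne.symm hst) = mkPair s t hst from
            Subtype.ext (Finset.pair_comm t s),
            show mkPair u s (Ne.symm hsu) = mkPair s u hsu from
            Subtype.ext (Finset.pair_comm u s)] at key
          exact key
        · rw [emit_of_ne i j hij (c := (mkPair s t hst, e1)) h1,
            emit_of_ne i j hij (c := (mkPair s t hst, e1)) h1,
            emit_of_ne i j hij (c := (mkPair s u hsu, e2)) h2,
            emit_of_ne i j hij (c := (mkPair s u hsu, e2)) h2,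
            emit_of_ne i j hij (c := (mkPair t u htu, e3)) h3,
            emit_of_ne i j hij (c := (mkPair t u htu, e3)) h3]
  · funext x
    show ((if x = (mkPair s t hst, e1) then (1 : ZMod 2) else 0)
        + (if x = (mkPair s u hsu, e2) then 1 else 0))
        + (if x = (mkPair t u htu, e3) then 1 else 0)
      = ((if x = (mkPair t u htu, e3) then (1 : ZMod 2) else 0)
        + (if x = (mkPair s u hsu, e2) then 1 else 0))
        + (if x = (mkPair s t hst, e1) then 1 else 0)
    ring

lemma rels_ok (i j : Fin n) (hij : i ≠ j) :
    ∀ r ∈ gnP2Rels n, FreeGroup.lift (gg i j hij) r = 1 := by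
  rintro r (⟨a, b, hab, ε, rfl⟩ |
    ⟨a, b, c', d, hab, hcd, ε₁, ε₂, hd1, hd2, hd3, hd4, rfl⟩ |
    ⟨a, b, c', hab, hac, hbc, E1, E2, E3, hp, rfl⟩)
  · simp only [map_mul, FreeGroup.lift_apply_of]
    exact gg_mul_self i j hij (mkPair a b hab, ε)
  · simp only [map_mul, map_inv, FreeGroup.lift_apply_of]
    rw [mul_inv_eq_one, mul_inv_eq_iff_eq_mul]
    refine gg_comm i j hij _ _ ?_
    intro x hx
    rcases mem_mkPair' x a b hab hx with h | h
    · intro hmem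
      rcases mem_mkPair' x c' d hcd hmem with h' | h'
      · exact hd1 (h.symm.trans h')
      · exact hd2 (h.symm.trans h')
    · intro hmem
      rcases mem_mkPair' x c' d hcd hmem with h' | h'
      · exact hd3 (h.symm.trans h')
      · exact hd4 (h.symm.trans h')
  · simp only [map_mul, map_inv, FreeGroup.lift_apply_of]
    rw [mul_inv_eq_one]
    exact gg_tri i j hij a b c' hab hac hbc E1 E2 E3 hp

lemma factor_eq (i j : Fin n) (hij : i ≠ j) (c : PairIdx n × ZMod 2) (N : St n) :
    (if c.1 = mkPair i j hij then
       PresentedGroup.of (fun k : {l : Fin n // l ≠ i ∧ l ≠ j} =>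
         if c.2 = 0 then
           N (mkPair i k.1 (Ne.symm k.2.1), 0) + N (mkPair j k.1 (Ne.symm k.2.2), 0)
         else
           N (mkPair i k.1 (Ne.symm k.2.1), 0) + N (mkPair j k.1 (Ne.symm k.2.2), 1))
     else 1) = emit i j hij c N := by
  unfold emit
  by_cases hc : c.1 = mkPair i j hij
  · rw [if_pos hc, if_pos hc]
    congr 1
    funext k
    have h2 : c.2 = 0 ∨ c.2 = 1 := by
      have : ∀ e : ZMod 2, e = 0 ∨ e = 1 := by decide
      exact this c.2
    rcases h2 with h | h <;> rw [h] <;> simp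
  · rw [if_neg hc, if_neg hc]

lemma prod_fn (i j : Fin n) (hij : i ≠ j) :
    ∀ (L : List ((PairIdx n × ZMod 2) × Bool)) (N : St n),
      ((L.map fun x => gg i j hij x.1).prod).fn N = wW n i j hij L N
  | [], _ => rfl
  | (c, b) :: L, N => by
      rw [List.map_cons, List.prod_cons]
      show emit i j hij c N *
        ((L.map fun x => gg i j hij x.1).prod).fn (fun x => N x + if x = c then 1 else 0) = _
      rw [prod_fn i j hij L]
      have hN : (fun x => N x + if x = c then (1 : ZMod 2) else 0)
          = Function.update N c (N c + 1) := by
        funext x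
        by_cases hx : x = c
        · subst hx; rw [if_pos rfl, Function.update_self]
        · rw [if_neg hx, add_zero, Function.update_of_ne hx]
      rw [hN]
      exact (congrArg (fun z => z * wW n i j hij L (Function.update N c (N c + 1)))
        (factor_eq i j hij c N)).symm

lemma lift_mk_eq (i j : Fin n) (hij : i ≠ j) (L : List ((PairIdx n × ZMod 2) × Bool)) :
    FreeGroup.lift (gg i j hij) (FreeGroup.mk L) = (L.map fun x => gg i j hij x.1).prod := by
  rw [FreeGroup.lift_mk]
  congr 1
  refine List.map_congr_left fun x _ => ?_
  rcases x with ⟨c, b⟩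
  cases b
  · show (gg i j hij c)⁻¹ = gg i j hij c
    exact gg_inv i j hij c
  · rfl

end S19

/-- `w^P_{{i,j}} : G_{n,P}^2 → F_n^2` is well defined: its value on a word
depends only on the element of `G_{n,P}^2` the word represents. -/
theorem stmt19 (n : ℕ) (hn : 2 < n) (i j : Fin n) (hij : i < j)
    (L₁ L₂ : List ((PairIdx n × ZMod 2) × Bool))
    (h : mkP n L₁ = mkP n L₂) :
    wW n i j hij.ne L₁ (fun _ => 0) = wW n i j hij.ne L₂ (fun _ => 0) := by
  have hre := S19.rels_ok i j hij.ne
  have key : ∀ L : List ((PairIdx n × ZMod 2) × Bool),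
      PresentedGroup.toGroup hre (mkP n L) = (L.map fun x => S19.gg i j hij.ne x.1).prod := by
    intro L
    rw [← S19.lift_mk_eq]
    rfl
  have h2 := congrArg (PresentedGroup.toGroup hre) h
  rw [key, key] at h2
  have h3 := congrArg S19.W.fn h2
  calc wW n i j hij.ne L₁ (fun _ => 0)
      = ((L₁.map fun x => S19.gg i j hij.ne x.1).prod).fn (fun _ => 0) :=
        (S19.prod_fn i j hij.ne L₁ _).symm
    _ = ((L₂.map fun x => S19.gg i j hij.ne x.1).prod).fn (fun _ => 0) :=
        congrFun h3 (fun _ => 0)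
    _ = wW n i j hij.ne L₂ (fun _ => 0) := S19.prod_fn i j hij.ne L₂ _
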